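/- Let X denote the power series variable in the ring ℚ⟦X⟧ of formal power series over ℚ. Suppose R, R' : ℕ → ℚ⟦X⟦ and S, S' : ℕ → ℚ⟦X⟧ satisfy all of the following: R 0 = 0 and R' 0 = 0; for every k ≥ 1 the constant coefficients of R k and R' k equal 1; for every k ≥ 0 the constant coefficients of S k and S' k equal 0; for every k ≥ 1, R k = 1 + X·(R k)·(S (k−1) + S k) and R' k = 1 + X·(R' k)·(S' (k−1) + S' k); and for every k ≥ 0, S k = X·((S k)² + R k + R (k+1)) and S' k = X·((S' k)² + R' k + R' (k+1)). Then R = R' and S = S'. -/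

import Mathlib

open PowerSeries

/-- Uniqueness of the formal power series solution of the classical slice system for
planar triangulations: any two families `(R, S)` and `(R', S')` of power series over `ℚ`
with `R 0 = 0`, constant coefficients `1` (for `R k`, `k ≥ 1`) and `0` (for `S k`),
satisfying `R k = 1 + X·R k·(S (k-1) + S k)` for `k ≥ 1` and
`S k = X·((S k)² + R k + R (k+1))` for all `k`, coincide. -/
theorem stmt19 (R R' S S' : ℕ → PowerSeries ℚ)
    (hR0 : R 0 = 0) (hR'0 : R' 0 = 0)
    (hRc : ∀ k, 1 ≤ k → constantCoeff (R k) = 1)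
    (hR'c : ∀ k, 1 ≤ k → constantCoeff (R' k) = 1)
    (hSc : ∀ k, constantCoeff (S k) = 0)
    (hS'c : ∀ k, constantCoeff (S' k) = 0)
    (hReq : ∀ k, 1 ≤ k → R k = 1 + X * R k * (S (k - 1) + S k))
    (hR'eq : ∀ k, 1 ≤ k → R' k = 1 + X * R' k * (S' (k - 1) + S' k))
    (hSeq : ∀ k, S k = X * ((S k) ^ 2 + R k + R (k + 1)))
    (hS'eq : ∀ k, S' k = X * ((S' k) ^ 2 + R' k + R' (k + 1))) :
    R = R' ∧ S = S' := by
  suffices h : ∀ n k, (coeff n (R k) = coeff n (R' k)) ∧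
      (coeff n (S k) = coeff n (S' k)) by
    constructor <;> funext k <;> ext n
    · exact (h n k).1
    · exact (h n k).2
  intro n
  induction n using Nat.strong_induction_on with
  | _ n ih =>
    match n with
    | 0 =>
      intro k
      constructor
      · rcases Nat.eq_zero_or_pos k with hk | hk
        · subst hk; rw [hR0, hR'0]
        · simp [coeff_zero_eq_constantCoeff, hRc k hk, hR'c k hk]
      · simp [coeff_zero_eq_constantCoeff, hSc k, hS'c k]
    | n + 1 =>
      have hprod : ∀ f g f' g' : PowerSeries ℚ,
          (∀ m, m ≤ n → coeff m f = coeff m f') →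
          (∀ m, m ≤ n → coeff m g = coeff m g') →
          coeff n (f * g) = coeff n (f' * g') := by
        intro f g f' g' hf hg
        rw [coeff_mul, coeff_mul]
        apply Finset.sum_congr rfl
        intro p hp
        rw [hf _ (Finset.HasAntidiagonal.antidiagonal.fst_le hp), hg _ (Finset.HasAntidiagonal.antidiagonal.snd_le hp)]
      have ihR : ∀ m, m ≤ n → ∀ k, coeff m (R k) = coeff m (R' k) := by
        intro m hm k; exact (ih m (Nat.lt_succ_of_le hm) k).1
      have ihS : ∀ m, m ≤ n → ∀ k, coeff m (S k) = coeff m (S' k) := by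
        intro m hm k; exact (ih m (Nat.lt_succ_of_le hm) k).2
      intro k
      constructor
      · rcases Nat.eq_zero_or_pos k with hk | hk
        · subst hk; rw [hR0, hR'0]
        · rw [hReq k hk, hR'eq k hk, mul_assoc, mul_assoc]
          simp only [map_add, coeff_succ_X_mul]
          congr 1
          exact hprod _ _ _ _ (fun m hm => ihR m hm k)
            (fun m hm => by simp only [map_add, ihS m hm (k-1), ihS m hm k])
      · rw [hSeq k, hS'eq k]
        simp only [coeff_succ_X_mul, map_add, sq]
        rw [hprod _ _ _ _ (fun m hm => ihS m hm k) (fun m hm => ihS m hm k),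
          ihR n le_rfl k, ihR n le_rfl (k+1)]
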